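/- For any scattered space (X, τ) and any ordinal Θ ≥ ρX, the rank function ρ_τ : X → Θ is the unique d-map from (X, τ) to Θ_0, the ordinal Θ equipped with the left topology. -/

import Mathlib

open Ordinal Set

noncomputable section

universe u

/-! ## Basic topological notions (explicit topologies) -/

/-- The derived set (set of limit points) of `A` w.r.t. the topology `t`. -/
def dSet {X : Type u} (t : TopologicalSpace X) (A : Set X) : Set X :=
  {x | ∀ U : Set X, t.IsOpen U → x ∈ U → ∃ y, y ∈ U ∩ A ∧ y ≠ x}

/-- Transfinite iterates of the derived-set operator, starting from the whole space. -/
def dIter {X : Type u} (t : TopologicalSpace X) (o : Ordinal.{u}) : Set X :=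
  Ordinal.limitRecOn o Set.univ (fun _ ih => dSet t ih)
    (fun o _ ih => ⋂ (o' : Ordinal.{u}) (h : o' < o), ih o' h)

/-- The Cantor–Bendixson rank of a point: the least `ξ` with `x ∉ d^{ξ+1} X`. -/
def ptRank {X : Type u} (t : TopologicalSpace X) (x : X) : Ordinal.{u} :=
  sInf {ξ : Ordinal.{u} | x ∉ dIter t (ξ + 1)}

/-- The rank of a space: `sup_{x ∈ X} (ρ(x) + 1)`. -/
def spRank (X : Type u) (t : TopologicalSpace X) : Ordinal.{u} :=
  ⨆ x : X, ptRank t x + 1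

/-- A space is scattered if every nonempty subset has an isolated point. -/
def IsScattered {X : Type u} (t : TopologicalSpace X) : Prop :=
  ∀ A : Set X, A.Nonempty → ∃ x ∈ A, ∃ U : Set X, t.IsOpen U ∧ U ∩ A = {x}

/-- A `d`-map: continuous, open and pointwise discrete. -/
def IsDMap {X : Type u} {Y : Type*} (t : TopologicalSpace X) (s : TopologicalSpace Y)
    (f : X → Y) : Prop :=
  @Continuous _ _ t s f ∧ @IsOpenMap _ _ t s f ∧
    ∀ y : Y, ∀ x : X, f x = y →
      ∃ U : Set X, t.IsOpen U ∧ x ∈ U ∧ ∀ z ∈ U, f z = y → z = x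

/-! ## Hyperexponentials and hyperlogarithms -/

/-- The exponential `e ξ = -1 + ω^ξ`. -/
def eFun (x : Ordinal.{u}) : Ordinal.{u} := ω ^ x - 1

/-- A normal ordinal function (the older Mathlib `Ordinal.IsNormal`, restated). -/
def Ordinal.IsNormal (f : Ordinal.{u} → Ordinal.{u}) : Prop :=
  (∀ o, f o < f (Order.succ o)) ∧
    ∀ o, Order.IsSuccLimit o → ∀ a, f o ≤ a ↔ ∀ b < o, f b ≤ a

/-- `E` is the family of hyperexponentials: a family of normal functions with `E 1 = e`,
`E (α+β) = E α ∘ E β`, pointwise minimal among all such families. -/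
def IsHyperexpFamily (E : Ordinal.{u} → Ordinal.{u} → Ordinal.{u}) : Prop :=
  (∀ a, Ordinal.IsNormal (E a)) ∧ E 1 = eFun ∧ (∀ a b, E (a + b) = E a ∘ E b) ∧
    ∀ F : Ordinal.{u} → Ordinal.{u} → Ordinal.{u},
      (∀ a, Ordinal.IsNormal (F a)) → F 1 = eFun → (∀ a b, F (a + b) = F a ∘ F b) →
        ∀ a b, E a b ≤ F a b

/-- The end logarithm: `ℓ 0 = 0` and `ℓ ξ` is the unique `β` with `ξ = α + ω^β`. -/
def ellFun (x : Ordinal.{u}) : Ordinal.{u} :=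
  if x = 0 then 0 else sInf {b : Ordinal.{u} | ∃ a, x = a + ω ^ b}

/-- An initial function maps initial segments onto initial segments. -/
def IsInitialFun (f : Ordinal.{u} → Ordinal.{u}) : Prop :=
  ∀ o : Ordinal.{u}, ∃ o' : Ordinal.{u}, f '' Set.Iio o = Set.Iio o'

/-- `L` is the family of hyperlogarithms: a family of initial functions with `L 1 = ℓ`,
`L (α+β) = L β ∘ L α`, pointwise maximal among all such families. -/
def IsHyperlogFamily (L : Ordinal.{u} → Ordinal.{u} → Ordinal.{u}) : Prop :=
  (∀ a, IsInitialFun (L a)) ∧ L 1 = ellFun ∧ (∀ a b, L (a + b) = L b ∘ L a) ∧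
    ∀ M : Ordinal.{u} → Ordinal.{u} → Ordinal.{u},
      (∀ a, IsInitialFun (M a)) → M 1 = ellFun → (∀ a b, M (a + b) = M b ∘ M a) →
        ∀ a b, M a b ≤ L a b

/-! ## Icard topologies -/

/-- The generalized Icard topology `τ_λ` based on a space `(X, t)`, relative to a family `L`
of hyperlogarithms: the least topology containing `t` and all sets
`(α, β]_ξ = {x | α < ℓ^ξ ρ_t(x) ≤ β}` (including `α = -1`, i.e. `[0, β]_ξ`), for `ξ < λ`. -/
def IcardTop {X : Type u} (L : Ordinal.{u} → Ordinal.{u} → Ordinal.{u})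
    (t : TopologicalSpace X) (lam : Ordinal.{u}) : TopologicalSpace X :=
  t ⊓ TopologicalSpace.generateFrom
    {S : Set X | ∃ ξ < lam,
      (∃ b : Ordinal.{u}, S = {x | L ξ (ptRank t x) ≤ b}) ∨
      (∃ a b : Ordinal.{u}, a < b ∧ S = {x | a < L ξ (ptRank t x) ∧ L ξ (ptRank t x) ≤ b})}

/-! ## Ordinal spaces -/

/-- The ordinal corresponding to a point of `Θ.ToType`. -/
def ordVal {Θ : Ordinal.{u}} (x : Θ.ToType) : Ordinal.{u} :=
  @Ordinal.typein Θ.ToType (· < ·) isWellOrder_lt x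

/-- The left topology `I₀` on (the canonical type of order type) `Θ`, generated by the
intervals `[0, β]`. -/
def leftTop (Θ : Ordinal.{u}) : TopologicalSpace Θ.ToType :=
  TopologicalSpace.generateFrom {S : Set Θ.ToType | ∃ b : Θ.ToType, S = Set.Iic b}

/-- The interval topology `I₁` on `Θ`, generated by the sets `[0, β]` and `(α, β]`. -/
def intervalTop (Θ : Ordinal.{u}) : TopologicalSpace Θ.ToType :=
  TopologicalSpace.generateFrom
    {S : Set Θ.ToType | (∃ b, S = Set.Iic b) ∨ ∃ a b : Θ.ToType, S = Set.Ioc a b}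

/-- The Icard topology `I_λ = (I₀)_λ` on the ordinal `Θ`: the least topology containing the
left topology and all sets `{x < Θ | α < ℓ^ξ x ≤ β}` for `ξ < λ`. -/
def ordIcard (L : Ordinal.{u} → Ordinal.{u} → Ordinal.{u}) (Θ lam : Ordinal.{u}) :
    TopologicalSpace Θ.ToType :=
  leftTop Θ ⊓ TopologicalSpace.generateFrom
    {S : Set Θ.ToType | ∃ ξ < lam,
      (∃ b : Ordinal.{u}, S = {x | L ξ (ordVal x) ≤ b}) ∨
      (∃ a b : Ordinal.{u}, a < b ∧ S = {x | a < L ξ (ordVal x) ∧ L ξ (ordVal x) ≤ b})}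

/-! ## Modal logic: GL and topological (d-)semantics -/

/-- Formulas of the basic modal language. -/
inductive Fml : Type
  | bot : Fml
  | var : ℕ → Fml
  | imp : Fml → Fml → Fml
  | box : Fml → Fml

namespace Fml

/-- Negation. -/
def neg (p : Fml) : Fml := p.imp .bot

/-- Diamond. -/
def dia (p : Fml) : Fml := (p.neg.box).neg

end Fml

/-- The valuation determined by an assignment `V` of sets to propositional variables, in the
`d`-semantics: `⟦◇φ⟧ = d⟦φ⟧`, i.e. `⟦◻φ⟧` is the complement of the derived set of the
complement of `⟦φ⟧`. -/
def fval {X : Type u} (t : TopologicalSpace X) (V : ℕ → Set X) : Fml → Set X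
  | .bot => ∅
  | .var n => V n
  | .imp p q => (fval t V p)ᶜ ∪ fval t V q
  | .box p => (dSet t (fval t V p)ᶜ)ᶜ

/-- Classical tautologies (boxed formulas and variables treated as atoms). -/
def Tautology (φ : Fml) : Prop :=
  ∀ v : Fml → Bool, v .bot = false → (∀ p q : Fml, v (p.imp q) = (!(v p) || v q)) →
    v φ = true

/-- Provability in the Gödel–Löb provability logic `GL`. -/
inductive GLProv : Fml → Prop
  | taut {φ : Fml} : Tautology φ → GLProv φ
  | axK (p q : Fml) : GLProv (((p.imp q).box).imp ((p.box).imp q.box))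
  | axLob (p : Fml) : GLProv ((((p.box).imp p).box).imp p.box)
  | mp {p q : Fml} : GLProv (p.imp q) → GLProv p → GLProv q
  | nec {p : Fml} : GLProv p → GLProv p.box

/-- A set of formulas is GL-consistent if no finite conjunction of its members provably
implies `⊥`. -/
def GLConsistent (Γ : Set Fml) : Prop :=
  ¬ ∃ l : List Fml, (∀ φ ∈ l, φ ∈ Γ) ∧ GLProv (l.foldr .imp .bot)

/-- `Γ` is satisfied in the space `(X, t)`. -/
def SatisfiedIn {X : Type u} (t : TopologicalSpace X) (Γ : Set Fml) : Prop :=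
  ∃ (V : ℕ → Set X) (x : X), ∀ φ ∈ Γ, x ∈ fval t V φ

/-- `GL` is strongly complete with respect to `(X, t)`. -/
def StronglyCompleteFor {X : Type u} (t : TopologicalSpace X) : Prop :=
  ∀ Γ : Set Fml, GLConsistent Γ → SatisfiedIn t Γ

/-- Validity of a formula in a space under the `d`-semantics. -/
def ValidIn {X : Type u} (t : TopologicalSpace X) (φ : Fml) : Prop :=
  ∀ V : ℕ → Set X, fval t V φ = Set.univ

/-! ## Trees and ω-bouquets -/

/-- The upset topology of a relation: opens are the `R`-upward closed sets. -/
def upTop {T : Type u} (R : T → T → Prop) : TopologicalSpace T where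
  IsOpen U := ∀ x ∈ U, ∀ y, R x y → y ∈ U
  isOpen_univ := fun x _ y _ => trivial
  isOpen_inter := fun s t hs ht x hx y hR => ⟨hs x hx.1 y hR, ht x hx.2 y hR⟩
  isOpen_sUnion := fun S hS x hx y hR => by
    obtain ⟨s, hsS, hxs⟩ := hx
    exact ⟨s, hsS, hS s hsS x hxs y hR⟩

/-- A countable, converse well-founded tree. -/
structure IsOmegaTree {T : Type u} (R : T → T → Prop) : Prop where
  countable : Countable T
  trans : ∀ a b c, R a b → R b c → R a c
  irrefl : ∀ a, ¬ R a a
  predWellOrdered : ∀ t : T, IsWellOrder {s : T // R s t} (fun a b => R a.1 b.1)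
  root : ∃! r : T, ∀ s : T, ¬ R s r
  converseWellFounded : WellFounded (fun a b : T => R b a)

/-- The daughters (immediate successors) of a node. -/
def daughters {T : Type u} (R : T → T → Prop) (w : T) : Set T :=
  {v | R w v ∧ ¬ ∃ u, R w u ∧ R u v}

/-- The bouquet topology `σ_R`: the least topology extending the upset topology such that
whenever `w` has limit rank, `(v_i)` enumerates the daughters of `w` without repetition and
`n < ω`, the set `{w} ∪ ⋃_{i > n} ({v_i} ∪ R(v_i))` is open. -/
def sigmaTop {T : Type u} (R : T → T → Prop) : TopologicalSpace T :=
  upTop R ⊓ TopologicalSpace.generateFrom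
    {S : Set T | ∃ w : T, Order.IsSuccLimit (ptRank (upTop R) w) ∧
      ∃ v : ℕ → T, Function.Injective v ∧ Set.range v = daughters R w ∧
        ∃ n : ℕ, S = {w} ∪ ⋃ (i : ℕ) (_ : n < i), ({v i} ∪ {u | R (v i) u})}

/-! ## The club topology (via its neighborhood characterization) -/

/-- `C` is a club in (i.e. a closed unbounded subset of) the point `x`. -/
def IsClubIn {Θ : Ordinal.{u}} (C : Set Θ.ToType) (x : Θ.ToType) : Prop :=
  (∀ y ∈ C, y < x) ∧ (∀ z, z < x → ∃ y ∈ C, z < y) ∧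
    ∀ z, z < x → (∃ w, w < z) → (∀ w, w < z → ∃ y ∈ C, w < y ∧ y < z) → z ∈ C

/-- `t` is the club topology on `Θ`: a set `U` is a neighborhood of a point `x ∈ U` iff
`U` contains a club in `x` or `cf(x) < ℵ₁`. -/
def IsClubTop (Θ : Ordinal.{u}) (t : TopologicalSpace Θ.ToType) : Prop :=
  ∀ (U : Set Θ.ToType) (x : Θ.ToType), x ∈ U →
    (U ∈ @nhds _ t x ↔
      (Ordinal.cof (ordVal x) < Cardinal.aleph 1 ∨ ∃ C ⊆ U, IsClubIn C x))

section Aux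

variable {X : Type u} (t : TopologicalSpace X)

theorem open_of_nbhds {S : Set X}
    (h : ∀ x ∈ S, ∃ U, t.IsOpen U ∧ x ∈ U ∧ U ⊆ S) : t.IsOpen S := by
  have hS : S = ⋃₀ {U | t.IsOpen U ∧ U ⊆ S} := by
    apply subset_antisymm
    · intro x hx
      obtain ⟨U, h1, h2, h3⟩ := h x hx
      exact ⟨U, ⟨h1, h3⟩, h2⟩
    · rintro x ⟨U, ⟨_, hU⟩, hx⟩
      exact hU hx
  rw [hS]
  exact t.isOpen_sUnion _ fun U hU => hU.1

theorem dSet_subset {A : Set X} (hA : t.IsOpen Aᶜ) : dSet t A ⊆ A := by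
  intro y hy
  by_contra hyA
  obtain ⟨z, hz, -⟩ := hy Aᶜ hA hyA
  exact absurd hz.2 hz.1

theorem dSet_compl_open {A : Set X} (hA : t.IsOpen Aᶜ) : t.IsOpen (dSet t A)ᶜ := by
  apply open_of_nbhds
  intro x hx
  rw [Set.mem_compl_iff] at hx
  simp only [dSet, Set.mem_setOf_eq] at hx
  push_neg at hx
  obtain ⟨U, hU, hxU, hno⟩ := hx
  refine ⟨U, hU, hxU, ?_⟩
  intro y hyU hyd
  have hyx : y = x := hno y ⟨hyU, dSet_subset t hA hyd⟩
  subst hyx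
  obtain ⟨z, hz, hzx⟩ := hyd U hU hyU
  exact hzx (hno z hz)

theorem dIter_zero : dIter t 0 = Set.univ := by
  unfold dIter; rw [Ordinal.limitRecOn_zero]

theorem dIter_succ (o : Ordinal.{u}) : dIter t (o + 1) = dSet t (dIter t o) := by
  unfold dIter; rw [Ordinal.add_one_eq_succ, Ordinal.limitRecOn_succ]

theorem dIter_limit {o : Ordinal.{u}} (h : Order.IsSuccLimit o) :
    dIter t o = ⋂ (o' : Ordinal.{u}) (_ : o' < o), dIter t o' := by
  unfold dIter; rw [Ordinal.limitRecOn_limit _ _ _ _ h]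

theorem dIter_closed (o : Ordinal.{u}) : t.IsOpen (dIter t o)ᶜ := by
  induction o using Ordinal.limitRecOn with
  | zero =>
    letI := t
    rw [dIter_zero, Set.compl_univ]
    exact isOpen_empty
  | add_one o ih =>
    rw [dIter_succ]
    exact dSet_compl_open t ih
  | limit o ho ih =>
    rw [dIter_limit t ho]
    rw [Set.compl_iInter]
    letI := t
    exact isOpen_iUnion fun o' => by
      rw [Set.compl_iInter]
      exact isOpen_iUnion fun h => ih o' h

theorem dIter_antitone : ∀ {ξ η : Ordinal.{u}}, ξ ≤ η → dIter t η ⊆ dIter t ξ := by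
  intro ξ η
  induction η using Ordinal.limitRecOn with
  | zero => intro h; rw [nonpos_iff_eq_zero.mp h]
  | add_one η ih =>
    intro h
    rcases eq_or_lt_of_le h with rfl | hlt
    · exact subset_rfl
    · have h1 : dIter t (η + 1) ⊆ dIter t η := by
        rw [dIter_succ]
        exact dSet_subset t (dIter_closed t η)
      exact h1.trans (ih (Order.lt_add_one_iff.mp hlt))
  | limit η hη ih =>
    intro h
    rcases eq_or_lt_of_le h with rfl | hlt
    · exact subset_rfl
    · intro x hx
      rw [dIter_limit t hη] at hx
      exact Set.mem_iInter₂.mp hx ξ hlt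


theorem exists_dIter_empty (hscat : IsScattered t) : ∃ ξ : Ordinal.{u}, dIter t ξ = ∅ := by
  by_contra h
  push_neg at h
  have hne : ∀ ξ : Ordinal.{u}, (dIter t ξ).Nonempty := h
  have key : ∀ ξ : Ordinal.{u}, ∃ x, x ∈ dIter t ξ ∧ x ∉ dIter t (ξ + 1) := by
    intro ξ
    obtain ⟨x, hx, U, hU, hUx⟩ := hscat _ (hne ξ)
    have hxU : x ∈ U := by
      have : x ∈ U ∩ dIter t ξ := by rw [hUx]; exact rfl
      exact this.1
    refine ⟨x, hx, ?_⟩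
    rw [dIter_succ]
    intro hmem
    obtain ⟨y, hy, hyx⟩ := hmem U hU hxU
    apply hyx
    have : y ∈ ({x} : Set X) := by rw [← hUx]; exact hy
    exact this
  choose g hg1 hg2 using key
  have ginj : Function.Injective g := by
    intro a b hab
    by_contra hne'
    have main : ∀ a b : Ordinal.{u}, a < b → g a = g b → False := by
      intro a b hlt heq
      have h1 : dIter t b ⊆ dIter t (a + 1) := by
        apply dIter_antitone
        rw [Ordinal.add_one_eq_succ]
        exact Order.succ_le_of_lt hlt
      exact hg2 a (heq ▸ h1 (hg1 b))
    rcases lt_trichotomy a b with hlt | heq | hlt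
    · exact main a b hlt hab
    · exact hne' heq
    · exact main b a hlt hab.symm
  have hle : Cardinal.univ.{u, u+1} ≤ Cardinal.lift.{u+1} (Cardinal.mk X) := by
    rw [Cardinal.univ_id, ← Cardinal.mk_uLift]
    exact Cardinal.mk_le_of_injective
      (f := fun ξ : Ordinal.{u} => ULift.up.{u+1} (g ξ))
      (fun a b hab => ginj (ULift.up_injective hab))
  exact absurd hle (not_le.2 (Cardinal.lift_lt_univ _))

variable {t}

theorem ptRank_set_nonempty (hscat : IsScattered t) (x : X) :
    {ξ : Ordinal.{u} | x ∉ dIter t (ξ + 1)}.Nonempty := by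
  obtain ⟨ξ, hξ⟩ := exists_dIter_empty t hscat
  refine ⟨ξ, ?_⟩
  intro hx
  have : x ∈ dIter t ξ := dIter_antitone t (le_of_lt (by
    rw [Ordinal.add_one_eq_succ]; exact Order.lt_succ ξ)) hx
  rw [hξ] at this
  exact this

theorem not_mem_dIter_rank_succ (hscat : IsScattered t) (x : X) :
    x ∉ dIter t (ptRank t x + 1) :=
  csInf_mem (ptRank_set_nonempty hscat x)

theorem mem_dIter_of_le {x : X} : ∀ {ξ : Ordinal.{u}}, ξ ≤ ptRank t x → x ∈ dIter t ξ := by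
  intro ξ
  induction ξ using Ordinal.limitRecOn with
  | zero => intro _; rw [dIter_zero]; trivial
  | add_one ξ ih =>
    intro h
    have hlt : ξ < ptRank t x := lt_of_lt_of_le (lt_add_one ξ) h
    by_contra hx
    have : ptRank t x ≤ ξ := csInf_le' (by
      rw [Set.mem_setOf_eq]; exact hx)
    exact absurd hlt (not_lt.2 this)
  | limit ξ hξ ih =>
    intro h
    rw [dIter_limit t hξ]
    exact Set.mem_iInter₂.mpr fun ξ' hlt => ih ξ' hlt (le_of_lt (lt_of_lt_of_le hlt h))

theorem mem_dIter_iff (hscat : IsScattered t) {x : X} {ξ : Ordinal.{u}} :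
    x ∈ dIter t ξ ↔ ξ ≤ ptRank t x := by
  constructor
  · intro hx
    by_contra hlt
    rw [not_le] at hlt
    have h1 : ptRank t x + 1 ≤ ξ := by
      rw [Ordinal.add_one_eq_succ]; exact Order.succ_le_of_lt hlt
    exact not_mem_dIter_rank_succ hscat x (dIter_antitone t h1 hx)
  · exact mem_dIter_of_le

theorem exists_rank_eq (hscat : IsScattered t) {U : Set X} (hU : t.IsOpen U) {x : X}
    (hx : x ∈ U) {β : Ordinal.{u}} (hβ : β ≤ ptRank t x) :
    ∃ y ∈ U, ptRank t y = β := by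
  have hxB : x ∈ U ∩ dIter t β := ⟨hx, mem_dIter_of_le hβ⟩
  obtain ⟨y, hy, V, hV, hVB⟩ := hscat (U ∩ dIter t β) ⟨x, hxB⟩
  have hyV : y ∈ V := by
    have : y ∈ V ∩ (U ∩ dIter t β) := by rw [hVB]; exact rfl
    exact this.1
  refine ⟨y, hy.1, le_antisymm ?_ ((mem_dIter_iff hscat).mp hy.2)⟩
  have hnot : y ∉ dIter t (β + 1) := by
    rw [dIter_succ]
    intro hmem
    obtain ⟨z, hz, hzy⟩ := hmem (V ∩ U) (t.isOpen_inter _ _ hV hU) ⟨hyV, hy.1⟩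
    apply hzy
    have : z ∈ ({y} : Set X) := by rw [← hVB]; exact ⟨hz.1.1, hz.1.2, hz.2⟩
    exact this
  by_contra hgt
  rw [not_le] at hgt
  exact hnot (mem_dIter_of_le (by rw [Ordinal.add_one_eq_succ]; exact Order.succ_le_of_lt hgt))

end Aux

section LeftTopAux

theorem leftTop_downclosed {Θ : Ordinal.{u}} {S : Set Θ.ToType}
    (h : (leftTop Θ).IsOpen S) : ∀ a b : Θ.ToType, a ≤ b → b ∈ S → a ∈ S := by
  have h' : TopologicalSpace.GenerateOpen {S : Set Θ.ToType | ∃ b, S = Set.Iic b} S := h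
  clear h
  induction h' with
  | basic V hV =>
    obtain ⟨b, rfl⟩ := hV
    intro a c hac hc
    exact le_trans hac hc
  | univ => intro a b _ _; trivial
  | inter V W _ _ ihV ihW =>
    intro a b hab hb
    exact ⟨ihV a b hab hb.1, ihW a b hab hb.2⟩
  | sUnion K _ ih =>
    rintro a b hab ⟨V, hVK, hbV⟩
    exact ⟨V, hVK, ih V hVK a b hab hbV⟩

theorem leftTop_open_of_downclosed {Θ : Ordinal.{u}} {S : Set Θ.ToType}
    (h : ∀ a b : Θ.ToType, a ≤ b → b ∈ S → a ∈ S) : (leftTop Θ).IsOpen S := by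
  have hS : S = ⋃₀ (Set.Iic '' S) := by
    apply subset_antisymm
    · intro x hx
      exact ⟨Set.Iic x, ⟨x, hx, rfl⟩, le_refl x⟩
    · rintro x ⟨V, ⟨b, hb, rfl⟩, hx⟩
      exact h x b hx hb
  rw [hS]
  exact TopologicalSpace.GenerateOpen.sUnion _
    (by rintro V ⟨b, -, rfl⟩; exact TopologicalSpace.GenerateOpen.basic _ ⟨b, rfl⟩)

end LeftTopAux

/-- For a scattered space `(X, τ)` and any ordinal `Θ ≥ ρX`, the rank
function is the unique d-map from `(X, τ)` to `Θ₀` (the ordinal `Θ` with the left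
topology): there is exactly one d-map, and any d-map computes the rank. -/
theorem rank_unique_dMap_to_leftTop {X : Type u} (t : TopologicalSpace X)
    (hscat : IsScattered t) (Θ : Ordinal.{u}) (hΘ : spRank X t ≤ Θ) :
    (∃! f : X → Θ.ToType, IsDMap t (leftTop Θ) f) ∧
      ∀ f : X → Θ.ToType, IsDMap t (leftTop Θ) f → ∀ x : X, ordVal (f x) = ptRank t x := by
  classical
  letI := t
  have hrlt : ∀ x : X, ptRank t x < Θ := by
    intro x
    have h1 : ptRank t x + 1 ≤ spRank X t := Ordinal.le_iSup (fun x => ptRank t x + 1) x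
    have h2 : ptRank t x < ptRank t x + 1 := by
      rw [Ordinal.add_one_eq_succ]; exact Order.lt_succ _
    exact lt_of_lt_of_le h2 (le_trans h1 hΘ)
  have hrlt' : ∀ x : X, ptRank t x < @Ordinal.type Θ.ToType (· < ·) isWellOrder_lt := by
    intro x; rw [Ordinal.type_toType]; exact hrlt x
  set f : X → Θ.ToType :=
    fun x => (@Ordinal.enum Θ.ToType (· < ·) isWellOrder_lt) ⟨ptRank t x, hrlt' x⟩ with hf
  have hval : ∀ x, ordVal (f x) = ptRank t x := fun x => @Ordinal.typein_enum Θ.ToType (· < ·) isWellOrder_lt (ptRank t x) (hrlt' x)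
  have hordle : ∀ a b : Θ.ToType, ordVal a ≤ ordVal b ↔ a ≤ b :=
    fun a b => Ordinal.typein_le_typein' Θ
  have hordinj : ∀ a b : Θ.ToType, ordVal a = ordVal b → a = b :=
    fun a b h => (@Ordinal.typein_inj Θ.ToType (· < ·) isWellOrder_lt a b).mp h
  have hcont : @Continuous _ _ t (leftTop Θ) f := by
    rw [continuous_def]
    intro S hS
    have hdc := leftTop_downclosed hS
    apply open_of_nbhds t
    intro x hx
    refine ⟨(dIter t (ptRank t x + 1))ᶜ, dIter_closed t _, not_mem_dIter_rank_succ hscat x, ?_⟩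
    intro z hz
    have hle : ptRank t z ≤ ptRank t x := by
      by_contra hgt
      rw [not_le] at hgt
      exact hz (mem_dIter_of_le
        (by rw [Ordinal.add_one_eq_succ]; exact Order.succ_le_of_lt hgt))
    have hfz : f z ≤ f x := (hordle _ _).mp (by rw [hval, hval]; exact hle)
    exact hdc (f z) (f x) hfz hx
  have hopen : @IsOpenMap _ _ t (leftTop Θ) f := by
    intro U hU
    apply leftTop_open_of_downclosed
    rintro a b hab ⟨x, hxU, rfl⟩
    have hab' : ordVal a ≤ ptRank t x := by
      rw [← hval x]; exact (hordle _ _).mpr hab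
    obtain ⟨y, hyU, hy⟩ := exists_rank_eq hscat hU hxU hab'
    exact ⟨y, hyU, hordinj _ _ (by rw [hval, hy])⟩
  have hdisc : ∀ y : Θ.ToType, ∀ x : X, f x = y →
      ∃ U, t.IsOpen U ∧ x ∈ U ∧ ∀ z ∈ U, f z = y → z = x := by
    intro y x hxy
    have hx := not_mem_dIter_rank_succ hscat x
    rw [dIter_succ] at hx
    simp only [dSet, Set.mem_setOf_eq] at hx
    push_neg at hx
    obtain ⟨U, hU, hxU, hno⟩ := hx
    refine ⟨U, hU, hxU, ?_⟩
    intro z hzU hz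
    have hr : ptRank t z = ptRank t x := by
      rw [← hval z, ← hval x, hxy, hz]
    exact hno z ⟨hzU, mem_dIter_of_le (le_of_eq hr.symm)⟩
  have lemA : ∀ g : X → Θ.ToType, IsDMap t (leftTop Θ) g →
      ∀ ξ : Ordinal.{u}, ∀ x : X, x ∈ dIter t ξ → ξ ≤ ordVal (g x) := by
    intro g hg ξ
    induction ξ using Ordinal.limitRecOn with
    | zero => intro x _; exact zero_le
    | add_one ξ ih =>
      intro x hx
      have hxd : x ∈ dSet t (dIter t ξ) := by
        rwa [dIter_succ] at hx
      have hxξ : x ∈ dIter t ξ := dSet_subset t (dIter_closed t ξ) hxd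
      have hge : ξ ≤ ordVal (g x) := ih x hxξ
      rw [Order.add_one_le_iff]
      rcases lt_or_eq_of_le hge with h | h
      · exact h
      exfalso
      obtain ⟨U, hU, hxU, hdis⟩ := hg.2.2 (g x) x rfl
      have hIic : (leftTop Θ).IsOpen (Set.Iic (g x)) :=
        TopologicalSpace.GenerateOpen.basic _ ⟨g x, rfl⟩
      have hVopen : t.IsOpen (g ⁻¹' Set.Iic (g x)) := (continuous_def.mp hg.1) _ hIic
      obtain ⟨y, hy, hyx⟩ := hxd (U ∩ g ⁻¹' Set.Iic (g x))
        (t.isOpen_inter _ _ hU hVopen) ⟨hxU, le_refl (g x)⟩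
      have h1 : ξ ≤ ordVal (g y) := ih y hy.2
      have h2 : ordVal (g y) ≤ ordVal (g x) := (hordle _ _).mpr hy.1.2
      have h3 : g y = g x := hordinj _ _ (le_antisymm h2 (by rw [← h]; exact h1))
      exact hyx (hdis y hy.1.1 h3)
    | limit ξ hξ ih =>
      intro x hx
      by_contra hlt
      rw [not_le] at hlt
      have h1 : Order.succ (ordVal (g x)) < ξ := hξ.succ_lt hlt
      have hx2 : x ∈ dIter t (Order.succ (ordVal (g x))) := by
        rw [dIter_limit t hξ] at hx
        exact Set.mem_iInter₂.mp hx _ h1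
      exact absurd (ih _ h1 x hx2) (not_le.2 (Order.lt_succ _))
  have lemB : ∀ g : X → Θ.ToType, IsDMap t (leftTop Θ) g →
      ∀ γ : Ordinal.{u}, ∀ x : X, ordVal (g x) = γ → γ ≤ ptRank t x := by
    intro g hg γ
    induction γ using Ordinal.induction with
    | h γ ih =>
      intro x hγ
      by_contra hgt
      rw [not_le] at hgt
      have hx := not_mem_dIter_rank_succ hscat x
      rw [dIter_succ] at hx
      simp only [dSet, Set.mem_setOf_eq] at hx
      push_neg at hx
      obtain ⟨V, hV, hxV, hno⟩ := hx
      set c : Θ.ToType := (@Ordinal.enum Θ.ToType (· < ·) isWellOrder_lt) ⟨ptRank t x, hrlt' x⟩ with hcdef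
      have hc : ordVal c = ptRank t x := @Ordinal.typein_enum Θ.ToType (· < ·) isWellOrder_lt (ptRank t x) (hrlt' x)
      have hcg : c ≤ g x := (hordle _ _).mp (by rw [hc, hγ]; exact le_of_lt hgt)
      have himg : (leftTop Θ).IsOpen (g '' V) := hg.2.1 V hV
      obtain ⟨z, hzV, hzc⟩ := leftTop_downclosed himg c (g x) hcg ⟨x, hxV, rfl⟩
      have hvz : ordVal (g z) = ptRank t x := by rw [hzc, hc]
      have hle : ptRank t x ≤ ptRank t z := ih (ptRank t x) hgt z hvz
      have hzx : z = x := hno z ⟨hzV, mem_dIter_of_le hle⟩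
      rw [hzx] at hzc
      rw [hzc, hc] at hγ
      exact absurd hγ (ne_of_lt hgt)
  have hvals : ∀ g : X → Θ.ToType, IsDMap t (leftTop Θ) g →
      ∀ x : X, ordVal (g x) = ptRank t x := by
    intro g hg x
    exact le_antisymm (lemB g hg _ x rfl)
      (lemA g hg (ptRank t x) x (mem_dIter_of_le le_rfl))
  have hfd : IsDMap t (leftTop Θ) f := ⟨hcont, hopen, hdisc⟩
  refine ⟨⟨f, hfd, ?_⟩, hvals⟩
  intro g hg
  funext x
  exact hordinj _ _ (by rw [hvals g hg x, hval x])

end
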